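/- For every hypergraph H on n vertices, the conflict-free choice number satisfies ch_CF(H) ≤ χ_CF(H) · ln n + 1, and the proper choice number satisfies ch(H) ≤ χ(H) · ln n + 1. -/

import Mathlib

def IsProperColoring {V : Type*} (E : Finset (Finset V)) (C : V → ℕ) : Prop :=
  ∀ e ∈ E, 2 ≤ e.card → ∃ x ∈ e, ∃ y ∈ e, C x ≠ C y

def IsCFColoring {V : Type*} (E : Finset (Finset V)) (C : V → ℕ) : Prop :=
  ∀ e ∈ E, e.Nonempty → ∃ x ∈ e, ∀ y ∈ e, y ≠ x → C y ≠ C x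

open Finset in
private lemma cf_key {V : Type*} [Fintype V] (a : ℕ) (C : V → ℕ) (hC : ∀ v, C v < a)
    (L : V → Finset ℕ)
    (hL : ∀ v, (a : ℝ) * Real.log (Fintype.card V) + 1 ≤ ((L v).card : ℝ)) :
    ∃ f : V → ℕ, (∀ v, f v ∈ L v) ∧ ∀ u v, C u ≠ C v → f u ≠ f v := by
  classical
  cases isEmpty_or_nonempty V with
  | inl h => exact ⟨fun _ => 0, fun v => (h.false v).elim, fun u => (h.false u).elim⟩
  | inr h =>
    set n := Fintype.card V with hn
    have hn0 : 0 < n := Fintype.card_pos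
    have ha : 0 < a := lt_of_le_of_lt (Nat.zero_le _) (hC (Classical.arbitrary V))
    set S : Finset ℕ := Finset.univ.biUnion L with hS
    have hsub : ∀ v, L v ⊆ S := fun v => Finset.subset_biUnion_of_mem L (mem_univ v)
    set m := S.card with hm
    set C' : V → Fin a := fun v => ⟨C v, hC v⟩ with hC'
    set Bad : V → Finset (↥S → Fin a) :=
      fun v => univ.filter (fun g => ∀ c : ↥S, (c : ℕ) ∈ L v → g c ≠ C' v) with hBad
    have hBadcard : ∀ v, (Bad v).card = (a - 1) ^ (L v).card * a ^ (m - (L v).card) := by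
      intro v
      have e1 : (Bad v).card
          = Fintype.card {g : ↥S → Fin a // ∀ c : ↥S, (c : ℕ) ∈ L v → g c ≠ C' v} := by
        rw [Fintype.card_subtype]
      have e2 : Fintype.card {g : ↥S → Fin a // ∀ c : ↥S, (c : ℕ) ∈ L v → g c ≠ C' v}
          = ∏ c : ↥S, Fintype.card {x : Fin a // (c : ℕ) ∈ L v → x ≠ C' v} := by
        rw [Fintype.card_congr (Equiv.subtypePiEquivPi
          (p := fun (c : ↥S) (x : Fin a) => (c : ℕ) ∈ L v → x ≠ C' v)), Fintype.card_pi]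
      have hfac : ∀ c : ↥S, Fintype.card {x : Fin a // (c : ℕ) ∈ L v → x ≠ C' v}
          = if (c : ℕ) ∈ L v then a - 1 else a := by
        intro c
        by_cases hc : (c : ℕ) ∈ L v
        · simp only [hc, if_true, forall_true_left]
          simp [Fintype.card_subtype_compl]
        · simp [hc, Fintype.card_subtype]
      rw [e1, e2]
      calc (∏ c : ↥S, Fintype.card {x : Fin a // (c : ℕ) ∈ L v → x ≠ C' v})
          = ∏ c : ↥S, (if (c : ℕ) ∈ L v then a - 1 else a) := by
            exact Finset.prod_congr rfl (fun c _ => hfac c)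
        _ = ∏ c ∈ S, (if c ∈ L v then a - 1 else a) :=
              Finset.prod_coe_sort S (fun c => if c ∈ L v then a - 1 else a)
        _ = (a - 1) ^ (L v).card * a ^ (m - (L v).card) := by
            rw [Finset.prod_ite, Finset.prod_const, Finset.prod_const]
            congr 1
            · congr 1
              rw [Finset.filter_mem_eq_inter, Finset.inter_eq_right.mpr (hsub v)]
            · congr 1
              rw [Finset.filter_not, Finset.filter_mem_eq_inter,
                Finset.inter_eq_right.mpr (hsub v), Finset.card_sdiff_of_subset (hsub v)]
    have hbound : ∀ v, ((Bad v).card : ℝ) < (a : ℝ) ^ m / n := by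
      intro v
      set k := (L v).card with hk
      have hkm : k ≤ m := Finset.card_le_card (hsub v)
      have haR : (0 : ℝ) < a := by exact_mod_cast ha
      have hnR : (0 : ℝ) < n := by exact_mod_cast hn0
      have hcast : (((a - 1) ^ k * a ^ (m - k) : ℕ) : ℝ)
          = ((a : ℝ) - 1) ^ k * (a : ℝ) ^ (m - k) := by
        push_cast [Nat.cast_sub ha]
        ring
      rw [hBadcard v, hcast]
      have hsplit : ((a : ℝ) - 1) ^ k * (a : ℝ) ^ (m - k)
          = (a : ℝ) ^ m * (((a : ℝ) - 1) / a) ^ k := by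
        have hpm : (a : ℝ) ^ m = (a : ℝ) ^ (m - k) * (a : ℝ) ^ k := by
          rw [← pow_add, Nat.sub_add_cancel hkm]
        rw [div_pow, hpm]
        field_simp
      rw [hsplit]
      have hfrac : (((a : ℝ) - 1) / a) ^ k < 1 / n := by
        have h1 : ((a : ℝ) - 1) / a ≤ Real.exp (-(1 / a)) := by
          have hh := Real.add_one_le_exp (-(1 / a))
          have heq : ((a : ℝ) - 1) / a = -(1 / a) + 1 := by
            field_simp
            ring
          rw [heq]
          exact hh
        have h0 : (0 : ℝ) ≤ ((a : ℝ) - 1) / a := by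
          apply div_nonneg _ haR.le
          have : (1 : ℝ) ≤ a := by exact_mod_cast ha
          linarith
        have h2 : (((a : ℝ) - 1) / a) ^ k ≤ Real.exp (-(1 / a)) ^ k :=
          pow_le_pow_left₀ h0 h1 k
        have h3 : Real.exp (-(1 / a)) ^ k = Real.exp (-(k / a)) := by
          rw [← Real.exp_nat_mul]
          congr 1
          field_simp
        have hkbig : Real.log n + 1 / a ≤ (k : ℝ) / a := by
          rw [le_div_iff₀ haR]
          have heq : (Real.log n + 1 / a) * a = (a : ℝ) * Real.log n + 1 := by
            field_simp
          rw [heq]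
          exact hL v
        have h4 : Real.exp (-(k / a)) ≤ Real.exp (-(Real.log n + 1 / a)) := by
          apply Real.exp_le_exp.mpr
          linarith
        have h5 : Real.exp (-(Real.log n + 1 / a)) < 1 / n := by
          rw [neg_add, Real.exp_add, Real.exp_neg, Real.exp_log hnR]
          have : Real.exp (-(1 / a)) < 1 := Real.exp_lt_one_iff.mpr
            (by have : (0:ℝ) < 1 / a := by positivity
                linarith)
          calc (n : ℝ)⁻¹ * Real.exp (-(1 / a)) < (n : ℝ)⁻¹ * 1 := by
                apply mul_lt_mul_of_pos_left this (by positivity)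
            _ = 1 / n := by rw [mul_one, one_div]
        calc (((a : ℝ) - 1) / a) ^ k ≤ Real.exp (-(k / a)) := h3 ▸ h2
          _ ≤ _ := h4
          _ < 1 / n := h5
      calc (a : ℝ) ^ m * (((a : ℝ) - 1) / a) ^ k
          < (a : ℝ) ^ m * (1 / n) := by
            apply mul_lt_mul_of_pos_left hfrac (by positivity)
        _ = (a : ℝ) ^ m / n := by ring
    have hsum : (∑ v : V, (Bad v).card) < a ^ m := by
      have hR : ((∑ v : V, (Bad v).card : ℕ) : ℝ) < ((a ^ m : ℕ) : ℝ) := by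
        push_cast
        calc (∑ v : V, ((Bad v).card : ℝ))
            < ∑ _v : V, (a : ℝ) ^ m / n :=
              Finset.sum_lt_sum_of_nonempty univ_nonempty (fun v _ => hbound v)
          _ = n * ((a : ℝ) ^ m / n) := by
              rw [Finset.sum_const, Finset.card_univ, nsmul_eq_mul]
          _ = (a : ℝ) ^ m := by
              field_simp
      exact_mod_cast hR
    have hcardT : Fintype.card (↥S → Fin a) = a ^ m := by
      rw [Fintype.card_fun, Fintype.card_fin, Fintype.card_coe]
    have hgood : ∃ g : ↥S → Fin a, ∀ v, g ∉ Bad v := by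
      by_contra hcon
      push_neg at hcon
      have hsub2 : (univ : Finset (↥S → Fin a)) ⊆ univ.biUnion Bad := by
        intro g _
        obtain ⟨v, hv⟩ := hcon g
        exact Finset.mem_biUnion.mpr ⟨v, mem_univ v, hv⟩
      have h1 := Finset.card_le_card hsub2
      have h2 := Finset.card_biUnion_le (s := (univ : Finset V)) (t := Bad)
      rw [Finset.card_univ, hcardT] at h1
      omega
    obtain ⟨g, hg⟩ := hgood
    have hpick : ∀ v, ∃ c : ↥S, (c : ℕ) ∈ L v ∧ g c = C' v := by
      intro v
      have h1 := hg v
      rw [hBad, Finset.mem_filter] at h1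
      push_neg at h1
      exact h1 (mem_univ g)
    refine ⟨fun v => ((hpick v).choose : ℕ), fun v => (hpick v).choose_spec.1, ?_⟩
    intro u v huv hfe
    apply huv
    have hceq : (hpick u).choose = (hpick v).choose := Subtype.ext hfe
    have hgc : g (hpick u).choose = g (hpick v).choose := by rw [hceq]
    rw [(hpick u).choose_spec.2, (hpick v).choose_spec.2] at hgc
    exact congrArg Fin.val hgc

/-- `ch_CF(H) ≤ χ_CF(H) · ln n + 1` and `ch(H) ≤ χ(H) · ln n + 1`: if `H` has
a conflict-free (resp. proper) coloring with `a` (resp. `b`) colors, then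
from any lists of size at least `a · ln n + 1` (resp. `b · ln n + 1`) one can
choose a conflict-free (resp. proper) coloring. -/
theorem cf_and_proper_choice {V : Type*} [Fintype V]
    (E : Finset (Finset V)) (a b : ℕ)
    (hcf : ∃ C : V → ℕ, (∀ v, C v < a) ∧ IsCFColoring E C)
    (hpr : ∃ C : V → ℕ, (∀ v, C v < b) ∧ IsProperColoring E C)
    (L : V → Finset ℕ) :
    ((∀ v, (a : ℝ) * Real.log (Fintype.card V) + 1 ≤ ((L v).card : ℝ)) →
      ∃ f : V → ℕ, (∀ v, f v ∈ L v) ∧ IsCFColoring E f) ∧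
    ((∀ v, (b : ℝ) * Real.log (Fintype.card V) + 1 ≤ ((L v).card : ℝ)) →
      ∃ f : V → ℕ, (∀ v, f v ∈ L v) ∧ IsProperColoring E f) := by
  constructor
  · intro hLa
    obtain ⟨C, hCa, hcol⟩ := hcf
    obtain ⟨f, hfL, href⟩ := cf_key a C hCa L hLa
    refine ⟨f, hfL, ?_⟩
    intro e he hne
    obtain ⟨x, hx, hxu⟩ := hcol e he hne
    exact ⟨x, hx, fun y hy hyx => href y x (hxu y hy hyx)⟩
  · intro hLb
    obtain ⟨C, hCb, hcol⟩ := hpr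
    obtain ⟨f, hfL, href⟩ := cf_key b C hCb L hLb
    refine ⟨f, hfL, ?_⟩
    intro e he hcard
    obtain ⟨x, hx, y, hy, hxy⟩ := hcol e he hcard
    exact ⟨x, hx, y, hy, href x y hxy⟩
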